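/- arXiv:1102.5136 — 2 statements merged into one kernel-verified Lean document; each statement's English description precedes it below -/
import Mathlib

section
/- Let X = {(x_k)_{k≥1} ∈ {0,1,2}^{ℕ⁺} : if x_k = 1 then x_{2k} = 0, and if x_k = 2 then x_{2k} = 1, for all k ≥ 1}. Then the Minkowski dimension of X exists and equals Σ_{k=1}^∞ log₃(T_{k-1}) / 2^{k+1}, where T_0 = 3, T_1 = 5, T_2 = 9 and T_{k+2} = T_{k-1} + T_k + T_{k+1} for k ≥ 1. -/
open scoped Classical ENNReal
open Filter MeasureTheory Topology

noncomputable section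

/-- `Begins x u` : the finite word `u` is a prefix of the sequence `x` (indexed by `ℕ+`). -/
def Begins {m : ℕ} (x : ℕ+ → Fin m) (u : List (Fin m)) : Prop :=
  ∀ j : Fin u.length, x ⟨(j : ℕ) + 1, Nat.succ_pos _⟩ = u.get j

/-- `Cyl u` : the cylinder set of the word `u`. -/
def Cyl {m : ℕ} (u : List (Fin m)) : Set (ℕ+ → Fin m) := {x | Begins x u}

/-- `Pref Ω` : the set of (finite) prefixes of sequences in `Ω`. -/
def Pref {m : ℕ} (Ω : Set (ℕ+ → Fin m)) : Set (List (Fin m)) := {u | ∃ x ∈ Ω, Begins x u}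

/-- number of length-`n` words beginning some sequence of `X`. -/
def NWords {m : ℕ} (n : ℕ) (X : Set (ℕ+ → Fin m)) : ℕ :=
  Set.ncard {u : List (Fin m) | u.length = n ∧ u ∈ Pref X}

/-- restriction of `x` to the geometric progression `J_i = {i, qi, q²i, …}`:
`(x|J_i)_k = x_{q^{k-1} i}` for `k ≥ 1`. -/
def RestrJ {m : ℕ} (q : ℕ+) (x : ℕ+ → Fin m) (i : ℕ+) : ℕ+ → Fin m :=
  fun k => x (q ^ ((k : ℕ) - 1) * i)

/-- the multiplicative subshift `X_Ω = {x : x|J_i ∈ Ω for all i with q ∤ i}`. -/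
def XOm {m : ℕ} (q : ℕ+) (Ω : Set (ℕ+ → Fin m)) : Set (ℕ+ → Fin m) :=
  {x | ∀ i : ℕ+, ¬ q ∣ i → RestrJ q x i ∈ Ω}

/-- the real number `Σ_{k≥1} x_k m^{-k}` with base-`m` digit sequence `x`. -/
def ValMap (m : ℕ) (x : ℕ+ → Fin m) : ℝ := ∑' k : ℕ+, ((x k : ℕ) : ℝ) * (m : ℝ)⁻¹ ^ (k : ℕ)

/-- the subset of `[0,1]` of reals whose base-`m` digit sequence lies in `X`. -/
def XiSet {m : ℕ} (X : Set (ℕ+ → Fin m)) : Set ℝ := {r | ∃ x ∈ X, r = ValMap m x}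

/-- entropy (base-`m` logarithms) of the partition of `Ω` into `k`-cylinders, for a measure
supported on `Ω` (words that are not prefixes of `Ω` get measure `0` and contribute nothing). -/
def Hent (m : ℕ) (μ : Measure (ℕ+ → Fin m)) (k : ℕ) : ℝ :=
  -∑ u : Fin k → Fin m,
    ((μ (Cyl (List.ofFn u))).toReal * Real.logb m (μ (Cyl (List.ofFn u))).toReal)

/-- `s(Ω,μ) = (q-1)² Σ_{k≥1} H_m^μ(α_k)/q^{k+1}`. -/
def sOm (m : ℕ) (q : ℕ+) (μ : Measure (ℕ+ → Fin m)) : ℝ :=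
  ((q : ℝ) - 1) ^ 2 * ∑' k : ℕ, Hent m μ (k + 1) / (q : ℝ) ^ (k + 2)

/-- cylinder determined by the first `n` entries of `x`, i.e. `[x₁…x_n]`. -/
def CylN {m : ℕ} (n : ℕ) (x : ℕ+ → Fin m) : Set (ℕ+ → Fin m) :=
  {y | ∀ k : ℕ+, (k : ℕ) ≤ n → y k = x k}

/-- the cylinder `[u|J_i]` where `u = x₁…x_n`: sequences `y` with
`y_{ℓ+1} = x_{q^ℓ i}` for all `ℓ ≥ 0` with `q^ℓ i ≤ n`. -/
def CylJ {m : ℕ} (q n i : ℕ+) (x : ℕ+ → Fin m) : Set (ℕ+ → Fin m) :=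
  {y | ∀ ℓ : ℕ, q ^ ℓ * i ≤ n → y ⟨ℓ + 1, Nat.succ_pos _⟩ = x (q ^ ℓ * i)}

/-- `P` has the product structure `P[u] = ∏_{i ≤ |u|, q ∤ i} μ[u|J_i]` on cylinders. -/
def ProdProp {m : ℕ} (q : ℕ+) (μ P : Measure (ℕ+ → Fin m)) : Prop :=
  ∀ (n : ℕ+) (x : ℕ+ → Fin m),
    P (CylN (n : ℕ) x) = ∏ i ∈ (Finset.Icc 1 n).filter (fun i => ¬ q ∣ i), μ (CylJ q n i x)

/-- `t` is a `[1, m^{1/(q-1)}]`-valued solution of `t(u)^q = Σ_{j : uj ∈ Pref(Ω)} t(uj)`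
on the tree of prefixes of `Ω`. -/
def TSol {m : ℕ} (q : ℕ+) (Ω : Set (ℕ+ → Fin m)) (t : List (Fin m) → ℝ) : Prop :=
  ∀ u ∈ Pref Ω,
    t u ∈ Set.Icc 1 ((m : ℝ) ^ ((1 : ℝ) / ((q : ℝ) - 1))) ∧
    t u ^ (q : ℕ) =
      ∑ j ∈ Finset.univ.filter (fun j : Fin m => u ++ [j] ∈ Pref Ω), t (u ++ [j])

/-- `μ` has the cylinder values `μ[u₁…u_k] = ∏_{j=1}^k t(u₁…u_j)/t(u₁…u_{j-1})^q`
for prefixes `u` of `Ω`. -/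
def CylVals {m : ℕ} (q : ℕ+) (Ω : Set (ℕ+ → Fin m)) (t : List (Fin m) → ℝ)
    (μ : Measure (ℕ+ → Fin m)) : Prop :=
  ∀ u ∈ Pref Ω,
    μ (Cyl u) =
      ENNReal.ofReal (∏ j ∈ Finset.range u.length, t (u.take (j + 1)) / t (u.take j) ^ (q : ℕ))

namespace S17

def R3 (a b : Fin 3) : Prop := (a = 1 → b = 0) ∧ (a = 2 → b = 1)

def step (a : Fin 3) : Fin 3 := if a = 1 then 0 else if a = 2 then 1 else 0

lemma r3_step (a : Fin 3) : R3 a (step a) := by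
  fin_cases a <;> simp [R3, step]

def ext (u : List (Fin 3)) (j : ℕ) : Fin 3 :=
  if h : 1 ≤ j ∧ j ≤ u.length then u.get ⟨j-1, by omega⟩
  else if h2 : 2 ≤ j ∧ j % 2 = 0 then step (ext u (j/2))
  else 0
  decreasing_by exact Nat.div_lt_self (by omega) one_lt_two

lemma ext_of_le (u : List (Fin 3)) {j : ℕ} (h1 : 1 ≤ j) (h2 : j ≤ u.length) :
    ext u j = u.get ⟨j-1, by omega⟩ := by
  rw [ext, dif_pos ⟨h1, h2⟩]

lemma ext_of_gt (u : List (Fin 3)) {j : ℕ} (h1 : 2 ≤ j) (h2 : j % 2 = 0)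
    (h3 : ¬ j ≤ u.length) : ext u j = step (ext u (j/2)) := by
  rw [ext, dif_neg (fun hh => h3 hh.2), dif_pos ⟨h1, h2⟩]

def AdmL (u : List (Fin 3)) : Prop :=
  ∀ j : ℕ, (h : 2*j+1 < u.length) → R3 (u.get ⟨j, by omega⟩) (u.get ⟨2*j+1, h⟩)

def Xset : Set (ℕ+ → Fin 3) :=
  {x | ∀ k : ℕ+, (x k = 1 → x (2 * k) = 0) ∧ (x k = 2 → x (2 * k) = 1)}

lemma pref_iff (u : List (Fin 3)) : u ∈ Pref Xset ↔ AdmL u := by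
  constructor
  · rintro ⟨x, hx, hb⟩ j h
    have e1 : u.get ⟨j, by omega⟩ = x j.succPNat := (hb ⟨j, by omega⟩).symm
    have e2 : u.get ⟨2*j+1, h⟩ = x (2 * j.succPNat) := by
      rw [← hb ⟨2*j+1, h⟩]
      congr 1
    rw [e1, e2]
    exact hx j.succPNat
  · intro h
    refine ⟨fun p => ext u (p : ℕ), ?_, ?_⟩
    · intro k
      have hco : ((2 * k : ℕ+) : ℕ) = 2 * (k : ℕ) := by simp
      have hk1 : 1 ≤ (k:ℕ) := k.2
      show R3 (ext u (k : ℕ)) (ext u ((2 * k : ℕ+) : ℕ))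
      rcases Nat.lt_or_ge u.length (2 * (k:ℕ)) with hgt | hle
      · have hx2 : ext u ((2 * k : ℕ+) : ℕ) = step (ext u (k : ℕ)) := by
          rw [hco, ext_of_gt u (by omega) (by omega) (by omega)]
          congr 1
          congr 1
          omega
        rw [hx2]
        exact r3_step _
      · rw [ext_of_le u hk1 (by omega), hco, ext_of_le u (by omega) (by omega)]
        have h2 := h ((k:ℕ) - 1) (by omega)
        have e2 : (⟨2*((k:ℕ)-1)+1, by omega⟩ : Fin u.length) = ⟨2*(k:ℕ)-1, by omega⟩ := by
          apply Fin.ext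
          show 2*((k:ℕ)-1)+1 = 2*(k:ℕ)-1
          omega
        rw [e2] at h2
        exact h2
    · intro jf
      show ext u ((jf:ℕ)+1) = u.get jf
      rw [ext_of_le u (by omega) (by have := jf.2; omega)]
      congr 1

end S17
namespace S17

def AdmF (n : ℕ) (v : Fin n → Fin 3) : Prop :=
  ∀ j : ℕ, (h : 2*j+1 < n) → R3 (v ⟨j, by omega⟩) (v ⟨2*j+1, h⟩)

lemma admL_ofFn {n : ℕ} (v : Fin n → Fin 3) : AdmL (List.ofFn v) ↔ AdmF n v := by
  constructor
  · intro h j hj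
    have h2 : 2*j+1 < (List.ofFn v).length := by simpa using hj
    have := h j h2
    simpa [List.get_ofFn] using this
  · intro h j hj
    have hj' : 2*j+1 < n := by simpa using hj
    have := h j hj'
    simpa [List.get_ofFn] using this

lemma nwords_eq (n : ℕ) : NWords n Xset = Nat.card {v : Fin n → Fin 3 // AdmF n v} := by
  have hset : {u : List (Fin 3) | u.length = n ∧ u ∈ Pref Xset} =
      List.ofFn '' {v : Fin n → Fin 3 | AdmF n v} := by
    ext u
    constructor
    · rintro ⟨hlen, hpref⟩
      refine ⟨fun i => u.get (Fin.cast hlen.symm i), ?_, ?_⟩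
      · rw [Set.mem_setOf_eq, ← admL_ofFn]
        have : List.ofFn (fun i => u.get (Fin.cast hlen.symm i)) = u := by
          apply List.ext_get (by simp [hlen])
          intro i h1 h2
          simp [List.get_ofFn]
        rw [this]
        exact (pref_iff u).1 hpref
      · apply List.ext_get (by simp [hlen])
        intro i h1 h2
        simp [List.get_ofFn]
    · rintro ⟨v, hv, rfl⟩
      exact ⟨by simp, (pref_iff _).2 ((admL_ofFn v).2 hv)⟩
  rw [NWords, hset, Set.ncard_image_of_injective _ List.ofFn_injective,
    ← Nat.card_coe_set_eq]
  rfl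

def AdmC (L : ℕ) (c : Fin L → Fin 3) : Prop :=
  ∀ ℓ : ℕ, (h : ℓ+1 < L) → R3 (c ⟨ℓ, by omega⟩) (c ⟨ℓ+1, h⟩)

def W (L : ℕ) : ℕ := Nat.card {c : Fin L → Fin 3 // AdmC L c}

def odds (n : ℕ) : Finset ℕ := (Finset.range (n+1)).filter (fun i => i % 2 = 1)

lemma mem_odds {n i : ℕ} : i ∈ odds n ↔ i % 2 = 1 ∧ i ≤ n := by
  simp [odds, Nat.lt_succ_iff, and_comm]

def LL (n i : ℕ) : ℕ := Nat.log 2 (n / i) + 1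

lemma pow_mul_le {n i ℓ : ℕ} (hi : 1 ≤ i) (hin : i ≤ n) (hl : ℓ < LL n i) :
    2^ℓ * i ≤ n := by
  have h1 : 1 ≤ n / i := (Nat.one_le_div_iff (by omega)).2 hin
  have h2 : 2^ℓ ≤ n / i :=
    le_trans (Nat.pow_le_pow_right (by norm_num) (by unfold LL at hl; omega))
      (Nat.pow_log_le_self 2 (by omega))
  calc 2^ℓ * i ≤ (n/i) * i := Nat.mul_le_mul_right _ h2
    _ ≤ n := Nat.div_mul_le_self n i

lemma lt_LL {n i ℓ : ℕ} (hi : 1 ≤ i) (h : 2^ℓ * i ≤ n) : ℓ < LL n i := by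
  have h2 : 2^ℓ ≤ n / i := (Nat.le_div_iff_mul_le (by omega)).2 h
  have h3 : n / i ≠ 0 := by
    have : 1 ≤ 2^ℓ := Nat.one_le_two_pow
    omega
  have := (Nat.le_log_iff_pow_le one_lt_two h3).2 h2
  unfold LL
  omega

def vp (p : ℕ) : ℕ := p.factorization 2
def op (p : ℕ) : ℕ := p / 2 ^ (p.factorization 2)

lemma vp_op_decomp (p : ℕ) : 2 ^ (vp p) * (op p) = p :=
  Nat.ordProj_mul_ordCompl_eq_self p 2

lemma op_odd {p : ℕ} (hp : p ≠ 0) : op p % 2 = 1 := by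
  have h := Nat.not_dvd_ordCompl Nat.prime_two hp
  have : ¬ 2 ∣ op p := h
  omega

lemma vp_uniq {ℓ i : ℕ} (hi : i % 2 = 1) : vp (2^ℓ * i) = ℓ := by
  have hi0 : i ≠ 0 := by omega
  have h2 : ¬ (2:ℕ) ∣ i := by omega
  unfold vp
  rw [Nat.factorization_mul (by positivity) hi0]
  rw [Nat.Prime.factorization_pow Nat.prime_two]
  simp [Nat.factorization_eq_zero_of_not_dvd h2]

lemma op_uniq {ℓ i : ℕ} (hi : i % 2 = 1) : op (2^ℓ * i) = i := by
  have h := vp_op_decomp (2^ℓ * i)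
  rw [show vp (2^ℓ * i) = ℓ from vp_uniq hi] at h
  have h2 : (0:ℕ) < 2^ℓ := by positivity
  exact Nat.eq_of_mul_eq_mul_left h2 h

end S17
namespace S17

abbrev CT (n i : ℕ) := {f : Fin (LL n i) → Fin 3 // AdmC (LL n i) f}

lemma entry_congr {n : ℕ} (c : ∀ i : {i // i ∈ odds n}, CT n i.1)
    {i i' : {i // i ∈ odds n}} (h : i.1 = i'.1) {ℓ ℓ' : ℕ} (hℓ : ℓ = ℓ')
    (h1 : ℓ < LL n i.1) (h2 : ℓ' < LL n i'.1) :
    (c i).1 ⟨ℓ, h1⟩ = (c i').1 ⟨ℓ', h2⟩ := by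
  cases Subtype.ext h
  cases hℓ
  rfl

lemma odds_facts {n i : ℕ} (h : i ∈ odds n) : 1 ≤ i ∧ i ≤ n ∧ i % 2 = 1 := by
  have := mem_odds.1 h
  omega

lemma vp_double {p : ℕ} (hp : 1 ≤ p) : vp (2*p) = vp p + 1 ∧ op (2*p) = op p := by
  have hd : 2 ^ vp p * op p = p := vp_op_decomp p
  have hodd : op p % 2 = 1 := op_odd (by omega)
  have h2 : 2*p = 2 ^ (vp p + 1) * op p := by
    rw [pow_succ]
    calc 2*p = 2*(2^vp p * op p) := by rw [hd]
      _ = 2 ^ vp p * 2 * op p := by ring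
  rw [h2]
  exact ⟨vp_uniq hodd, op_uniq hodd⟩

/-- value of the chain family `c` at absolute position `p` -/
def invF (n : ℕ) (c : ∀ i : {i // i ∈ odds n}, CT n i.1) (p : ℕ)
    (hp1 : 1 ≤ p) (hpn : p ≤ n) : Fin 3 :=
  (c ⟨op p, by
      rw [mem_odds]
      exact ⟨op_odd (by omega), le_trans (Nat.ordCompl_le _ _) hpn⟩⟩).1
    ⟨vp p, lt_LL (i := op p) (by have := op_odd (p := p) (by omega); omega)
      (by rw [vp_op_decomp]; exact hpn)⟩

lemma invF_R3 (n : ℕ) (c : ∀ i : {i // i ∈ odds n}, CT n i.1) (p : ℕ)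
    (hp1 : 1 ≤ p) (hpn : p ≤ n) (h2p : 2*p ≤ n) (h1 : 1 ≤ 2*p) :
    R3 (invF n c p hp1 hpn) (invF n c (2*p) h1 h2p) := by
  obtain ⟨hv, ho⟩ := vp_double hp1
  have hd : 2 ^ vp p * op p = p := vp_op_decomp p
  have hlt : vp p + 1 < LL n (op p) := by
    apply lt_LL (i := op p) (by have := op_odd (p := p) (by omega); omega)
    calc 2 ^ (vp p + 1) * op p = 2 * (2 ^ vp p * op p) := by ring
      _ = 2 * p := by rw [hd]
      _ ≤ n := h2p
  unfold invF
  have e : (c ⟨op (2*p), by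
      rw [mem_odds]
      exact ⟨op_odd (by omega), le_trans (Nat.ordCompl_le _ _) h2p⟩⟩).1
      ⟨vp (2*p), lt_LL (i := op (2*p)) (by have := op_odd (p := 2*p) (by omega); omega)
        (by rw [vp_op_decomp]; exact h2p)⟩
      = (c ⟨op p, by
      rw [mem_odds]
      exact ⟨op_odd (by omega), le_trans (Nat.ordCompl_le _ _) hpn⟩⟩).1 ⟨vp p + 1, hlt⟩ :=
    entry_congr c ho hv _ _
  rw [e]
  exact (c _).2 (vp p) hlt

lemma invF_congr (n : ℕ) (c : ∀ i : {i // i ∈ odds n}, CT n i.1) {p p' : ℕ}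
    (hpp : p = p') (hp1 : 1 ≤ p) (hpn : p ≤ n) (hp1' : 1 ≤ p') (hpn' : p' ≤ n) :
    invF n c p hp1 hpn = invF n c p' hp1' hpn' := by
  cases hpp
  rfl

def toF (n : ℕ) (v : {v : Fin n → Fin 3 // AdmF n v}) : ∀ i : {i // i ∈ odds n}, CT n i.1 :=
  fun i => ⟨fun ℓ => v.1 ⟨2^(ℓ:ℕ) * i.1 - 1, by
      obtain ⟨hi1, hin, hodd⟩ := odds_facts i.2
      have h1 : 2^(ℓ:ℕ) * i.1 ≤ n := pow_mul_le hi1 hin ℓ.2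
      have h2 : 1 ≤ 2^(ℓ:ℕ) * i.1 := Nat.one_le_iff_ne_zero.2 (by positivity)
      omega⟩, by
    intro ℓ hℓ
    obtain ⟨hi1, hin, hodd⟩ := odds_facts i.2
    have hm1 : 1 ≤ 2^ℓ * i.1 := Nat.one_le_iff_ne_zero.2 (by positivity)
    have hle2 : 2^(ℓ+1) * i.1 ≤ n := pow_mul_le hi1 hin hℓ
    have hmul : 2^(ℓ+1) * i.1 = 2 * (2^ℓ * i.1) := by ring
    have key := v.2 (2^ℓ * i.1 - 1) (by omega)
    have e1 : (⟨2*(2^ℓ * i.1 - 1)+1, by omega⟩ : Fin n) = ⟨2^(ℓ+1) * i.1 - 1, by omega⟩ := by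
      apply Fin.ext
      show 2*(2^ℓ * i.1 - 1)+1 = 2^(ℓ+1) * i.1 - 1
      omega
    rw [e1] at key
    exact key⟩

def chainEquiv (n : ℕ) : {v : Fin n → Fin 3 // AdmF n v} ≃
    (∀ i : {i // i ∈ odds n}, CT n i.1) where
  toFun := toF n
  invFun c := ⟨fun j => invF n c (j.1+1) (by omega) j.2, by
    intro j hj
    show R3 (invF n c (j+1) (by omega) (by omega)) (invF n c (2*j+1+1) (by omega) (by omega))
    have e := invF_congr n c (show 2*(j+1) = 2*j+1+1 by ring) (by omega) (by omega)
      (by omega) (by omega)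
    rw [← e]
    exact invF_R3 n c (j+1) (by omega) (by omega) (by omega) (by omega)⟩
  left_inv v := by
    apply Subtype.ext
    funext j
    show invF n (toF n v) (j.1+1) (by omega) j.2 = v.1 j
    unfold invF toF
    have e : (⟨2 ^ vp (j.1+1) * op (j.1+1) - 1, by
        have := vp_op_decomp (j.1+1); have := j.2; omega⟩ : Fin n) = j := by
      apply Fin.ext
      show 2 ^ vp (j.1+1) * op (j.1+1) - 1 = j.1
      have := vp_op_decomp (j.1+1)
      omega
    exact congrArg v.1 e
  right_inv c := by
    funext i
    apply Subtype.ext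
    funext ℓ
    obtain ⟨hi1, hin, hodd⟩ := odds_facts i.2
    have hm1 : 1 ≤ 2^(ℓ:ℕ) * i.1 := Nat.one_le_iff_ne_zero.2 (by positivity)
    have hle : 2^(ℓ:ℕ) * i.1 ≤ n := pow_mul_le hi1 hin ℓ.2
    show invF n c (2^(ℓ:ℕ) * i.1 - 1 + 1) (by omega) (by omega) = (c i).1 ℓ
    have hsimp : 2^(ℓ:ℕ) * i.1 - 1 + 1 = 2^(ℓ:ℕ) * i.1 := by omega
    unfold invF
    refine Eq.trans (entry_congr c (i' := i) ?_ ?_ _ ℓ.2) (by simp)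
    · show op (2^(ℓ:ℕ) * i.1 - 1 + 1) = i.1
      rw [hsimp]
      exact op_uniq hodd
    · show vp (2^(ℓ:ℕ) * i.1 - 1 + 1) = (ℓ:ℕ)
      rw [hsimp]
      exact vp_uniq hodd

lemma card_eq_prod (n : ℕ) :
    Nat.card {v : Fin n → Fin 3 // AdmF n v} = ∏ i ∈ odds n, W (LL n i) := by
  rw [Nat.card_congr (chainEquiv n), Nat.card_pi]
  exact Finset.prod_coe_sort (odds n) (fun i => W (LL n i))

end S17
namespace S17

lemma nat_card_sigma {ι : Type} [Fintype ι] (f : ι → Type) [∀ i, Finite (f i)] :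
    Nat.card (Σ i, f i) = ∑ i, Nat.card (f i) := by
  letI : ∀ i, Fintype (f i) := fun i => Fintype.ofFinite _
  simp [Nat.card_eq_fintype_card]

def Pc (L : ℕ) (a : Fin 3) : ℕ := Nat.card {c : Fin (L+1) → Fin 3 // AdmC (L+1) c ∧ c 0 = a}

lemma admC_tail {L : ℕ} {f : Fin (L+2) → Fin 3} (hf : AdmC (L+2) f) :
    AdmC (L+1) (Fin.tail f) := by
  intro ℓ h
  have e1 : Fin.tail f ⟨ℓ, by omega⟩ = f ⟨ℓ+1, by omega⟩ := by
    rw [Fin.tail]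
    congr 1
  have e2 : Fin.tail f ⟨ℓ+1, h⟩ = f ⟨ℓ+2, by omega⟩ := by
    rw [Fin.tail]
    congr 1
  rw [e1, e2]
  exact hf (ℓ+1) (by omega)

lemma admC_cons {L : ℕ} {a : Fin 3} {d : Fin (L+1) → Fin 3} (hd : AdmC (L+1) d)
    (h : R3 a (d 0)) : AdmC (L+2) (Fin.cons a d) := by
  intro ℓ hℓ
  match ℓ with
  | 0 =>
    have e1 : (Fin.cons a d : Fin (L+2) → Fin 3) ⟨0, by omega⟩ = a := rfl
    have e2 : (Fin.cons a d : Fin (L+2) → Fin 3) ⟨1, hℓ⟩ = d 0 := by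
      have : (⟨1, hℓ⟩ : Fin (L+2)) = Fin.succ 0 := rfl
      rw [this, Fin.cons_succ]
    rw [e1, e2]
    exact h
  | (m+1) =>
    have e1 : (Fin.cons a d : Fin (L+2) → Fin 3) ⟨m+1, by omega⟩ = d ⟨m, by omega⟩ := by
      have : (⟨m+1, by omega⟩ : Fin (L+2)) = Fin.succ ⟨m, by omega⟩ := rfl
      rw [this, Fin.cons_succ]
    have e2 : (Fin.cons a d : Fin (L+2) → Fin 3) ⟨m+2, hℓ⟩ = d ⟨m+1, by omega⟩ := by
      have : (⟨m+2, hℓ⟩ : Fin (L+2)) = Fin.succ ⟨m+1, by omega⟩ := rfl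
      rw [this, Fin.cons_succ]
    rw [e1, e2]
    exact hd m (by omega)

lemma adm_head {L : ℕ} {f : Fin (L+2) → Fin 3} (hf : AdmC (L+2) f) : R3 (f 0) (f 1) := by
  have := hf 0 (by omega)
  have e1 : (⟨0, by omega⟩ : Fin (L+2)) = 0 := rfl
  have e2 : (⟨1, by omega⟩ : Fin (L+2)) = 1 := rfl
  rw [e1, e2] at this
  exact this

lemma tail_zero {L : ℕ} (f : Fin (L+2) → Fin 3) : Fin.tail f 0 = f 1 := rfl

/-- words of length L+2 starting with `a`, followed by forced letter `b`. -/
def consEquiv (L : ℕ) (a b : Fin 3) (hob : ∀ x : Fin 3, R3 a x ↔ x = b) :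
    {c : Fin (L+2) → Fin 3 // AdmC (L+2) c ∧ c 0 = a} ≃
    {d : Fin (L+1) → Fin 3 // AdmC (L+1) d ∧ d 0 = b} where
  toFun c := ⟨Fin.tail c.1, admC_tail c.2.1, by
    rw [tail_zero]
    have h := adm_head c.2.1
    rw [c.2.2] at h
    exact (hob _).1 h⟩
  invFun d := ⟨Fin.cons a d.1, admC_cons d.2.1 (by rw [d.2.2]; exact (hob b).2 rfl), by
    simp⟩
  left_inv c := by
    apply Subtype.ext
    show Fin.cons a (Fin.tail c.1) = c.1
    have h := Fin.cons_self_tail c.1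
    rw [c.2.2] at h
    exact h
  right_inv d := by
    apply Subtype.ext
    show Fin.tail (Fin.cons a d.1 : Fin (L+2) → Fin 3) = d.1
    funext j
    simp [Fin.tail, Fin.cons]

/-- words of length L+2 starting with `0`: tail is arbitrary admissible. -/
def consEquiv0 (L : ℕ) :
    {c : Fin (L+2) → Fin 3 // AdmC (L+2) c ∧ c 0 = 0} ≃
    {d : Fin (L+1) → Fin 3 // AdmC (L+1) d} where
  toFun c := ⟨Fin.tail c.1, admC_tail c.2.1⟩
  invFun d := ⟨Fin.cons 0 d.1, admC_cons d.2 (by constructor <;> intro h <;> simp at h), by simp⟩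
  left_inv c := by
    apply Subtype.ext
    show Fin.cons 0 (Fin.tail c.1) = c.1
    have h := Fin.cons_self_tail c.1
    rw [c.2.2] at h
    exact h
  right_inv d := by
    apply Subtype.ext
    show Fin.tail (Fin.cons 0 d.1 : Fin (L+2) → Fin 3) = d.1
    funext j
    simp [Fin.tail, Fin.cons]

def partEquiv (L : ℕ) : {c : Fin (L+1) → Fin 3 // AdmC (L+1) c} ≃
    Σ a : Fin 3, {c : Fin (L+1) → Fin 3 // AdmC (L+1) c ∧ c 0 = a} where
  toFun c := ⟨c.1 0, c.1, c.2, rfl⟩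
  invFun p := ⟨p.2.1, p.2.2.1⟩
  left_inv c := rfl
  right_inv p := by
    rcases p with ⟨a, c, hc, h0⟩
    cases h0
    rfl

lemma W_succ_eq_sum (L : ℕ) : W (L+1) = Pc L 0 + Pc L 1 + Pc L 2 := by
  rw [W, Nat.card_congr (partEquiv L), nat_card_sigma]
  show _ = Pc L 0 + Pc L 1 + Pc L 2
  rw [Fin.sum_univ_three]
  rfl

lemma Pc_zero (a : Fin 3) : Pc 0 a = 1 := by
  rw [Pc, Nat.card_eq_one_iff_unique]
  constructor
  · constructor
    rintro ⟨c, hc, h0⟩ ⟨d, hd, h0'⟩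
    apply Subtype.ext
    funext j
    have : j = 0 := by
      apply Fin.ext
      omega
    rw [this]
    show c 0 = d 0
    rw [h0, h0']
  · exact ⟨⟨fun _ => a, fun ℓ h => by omega, rfl⟩⟩

lemma Pc_succ_zero (L : ℕ) : Pc (L+1) 0 = W (L+1) :=
  Nat.card_congr (consEquiv0 L)

lemma hob1 (x : Fin 3) : R3 1 x ↔ x = 0 := by
  constructor
  · intro h
    exact h.1 rfl
  · intro h
    subst h
    exact ⟨fun _ => rfl, by intro h; simp at h⟩

lemma hob2 (x : Fin 3) : R3 2 x ↔ x = 1 := by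
  constructor
  · intro h
    exact h.2 rfl
  · intro h
    subst h
    exact ⟨by intro h; simp at h, fun _ => rfl⟩

lemma Pc_succ_one (L : ℕ) : Pc (L+1) 1 = Pc L 0 :=
  Nat.card_congr (consEquiv L 1 0 hob1)

lemma Pc_succ_two (L : ℕ) : Pc (L+1) 2 = Pc L 1 :=
  Nat.card_congr (consEquiv L 2 1 hob2)

end S17
namespace S17

def Sc (L : ℕ) : ℕ := Pc L 0 + Pc L 1 + Pc L 2

lemma W_succ (L : ℕ) : W (L+1) = Sc L := W_succ_eq_sum L

lemma Sc_zero : Sc 0 = 3 := by simp [Sc, Pc_zero]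

lemma Sc_one : Sc 1 = 5 := by
  have h0 : Pc 1 0 = W 1 := Pc_succ_zero 0
  rw [W_succ 0, Sc_zero] at h0
  have h1 : Pc 1 1 = Pc 0 0 := Pc_succ_one 0
  have h2 : Pc 1 2 = Pc 0 1 := Pc_succ_two 0
  simp [Sc, h0, h1, h2, Pc_zero]

lemma Sc_two : Sc 2 = 9 := by
  have h0 : Pc 2 0 = W 2 := Pc_succ_zero 1
  rw [W_succ 1, Sc_one] at h0
  have h1 : Pc 2 1 = Pc 1 0 := Pc_succ_one 1
  have h1' : Pc 1 0 = W 1 := Pc_succ_zero 0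
  rw [W_succ 0, Sc_zero] at h1'
  have h2 : Pc 2 2 = Pc 1 1 := Pc_succ_two 1
  have h2' : Pc 1 1 = Pc 0 0 := Pc_succ_one 0
  simp [Sc, h0, h1, h1', h2, h2', Pc_zero]

lemma Sc_rec (L : ℕ) : Sc (L+3) = Sc L + Sc (L+1) + Sc (L+2) := by
  have h0 : Pc (L+3) 0 = Sc (L+2) := by rw [Pc_succ_zero (L+2), W_succ]
  have h1 : Pc (L+3) 1 = Sc (L+1) := by
    rw [Pc_succ_one (L+2), Pc_succ_zero (L+1), W_succ]
  have h2 : Pc (L+3) 2 = Sc L := by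
    rw [Pc_succ_two (L+2), Pc_succ_one (L+1), Pc_succ_zero L, W_succ]
  rw [Sc, h0, h1, h2]
  omega

section Tpart
variable (T : ℕ → ℕ) (hT0 : T 0 = 3) (hT1 : T 1 = 5) (hT2 : T 2 = 9)
  (hTrec : ∀ k : ℕ, T (k + 3) = T k + T (k + 1) + T (k + 2))

include hT0 hT1 hT2 hTrec in
lemma Sc_eq_T : ∀ k, Sc k = T k := by
  intro k
  induction k using Nat.strong_induction_on with
  | _ k ih =>
    match k with
    | 0 => rw [Sc_zero, hT0]
    | 1 => rw [Sc_one, hT1]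
    | 2 => rw [Sc_two, hT2]
    | (m+3) =>
      rw [Sc_rec, hTrec m, ih m (by omega), ih (m+1) (by omega), ih (m+2) (by omega)]

include hT0 hT1 hT2 hTrec in
lemma T_lower : ∀ k, 3 ≤ T k := by
  intro k
  induction k using Nat.strong_induction_on with
  | _ k ih =>
    match k with
    | 0 => omega
    | 1 => omega
    | 2 => omega
    | (m+3) =>
      have := ih m (by omega)
      have := ih (m+1) (by omega)
      have := ih (m+2) (by omega)
      rw [hTrec m]
      omega

include hT0 hT1 hT2 hTrec in
lemma T_upper : ∀ k, T k ≤ 3 ^ (k+1) := by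
  intro k
  induction k using Nat.strong_induction_on with
  | _ k ih =>
    match k with
    | 0 => simp [hT0]
    | 1 => rw [hT1]; norm_num
    | 2 => rw [hT2]; norm_num
    | (m+3) =>
      have h1 := ih m (by omega)
      have h2 := ih (m+1) (by omega)
      have h3 := ih (m+2) (by omega)
      rw [hTrec m]
      calc T m + T (m+1) + T (m+2) ≤ 3^(m+1) + 3^(m+2) + 3^(m+3) := by
            exact Nat.add_le_add (Nat.add_le_add h1 h2) h3
        _ ≤ 3^(m+3) + 3^(m+3) + 3^(m+3) := by
            exact Nat.add_le_add (Nat.add_le_add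
              (Nat.pow_le_pow_right (by norm_num) (by omega))
              (Nat.pow_le_pow_right (by norm_num) (by omega))) (le_refl _)
        _ = 3^(m+3+1) := by ring

include hT0 hT1 hT2 hTrec in
lemma nwords_prod (n : ℕ) :
    NWords n Xset = ∏ i ∈ odds n, T (Nat.log 2 (n / i)) := by
  rw [nwords_eq, card_eq_prod]
  apply Finset.prod_congr rfl
  intro i _
  rw [show LL n i = Nat.log 2 (n / i) + 1 from rfl, W_succ, Sc_eq_T T hT0 hT1 hT2 hTrec]

end Tpart

lemma card_odds (M : ℕ) : (odds M).card = (M+1)/2 := by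
  induction M with
  | zero => rfl
  | succ M ih =>
    rw [odds, Finset.range_add_one, Finset.filter_insert]
    by_cases h : (M+1) % 2 = 1
    · rw [if_pos h, Finset.card_insert_of_notMem (by
        intro hmem
        have := Finset.mem_filter.1 hmem
        have := Finset.mem_range.1 this.1
        omega)]
      rw [show (Finset.range (M+1)).filter (fun i => i % 2 = 1) = odds M from rfl, ih]
      omega
    · rw [if_neg h]
      rw [show (Finset.range (M+1)).filter (fun i => i % 2 = 1) = odds M from rfl, ih]
      omega

lemma odds_mono {a b : ℕ} (h : a ≤ b) : odds a ⊆ odds b := by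
  intro i hi
  rw [mem_odds] at *
  omega

lemma le_div_iff' {i x n : ℕ} (hx : 0 < x) : i ≤ n / x ↔ x * i ≤ n := by
  rw [Nat.le_div_iff_mul_le hx, mul_comm]

lemma fiber_eq (n k : ℕ) :
    (odds n).filter (fun i => Nat.log 2 (n / i) = k) =
      odds (n / 2^k) \ odds (n / 2^(k+1)) := by
  ext i
  rw [Finset.mem_filter, Finset.mem_sdiff, mem_odds, mem_odds, mem_odds]
  constructor
  · rintro ⟨⟨hodd, hin⟩, hlog⟩
    have hi1 : 1 ≤ i := by omega
    have hdiv1 : 1 ≤ n / i := (Nat.one_le_div_iff (by omega)).2 hin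
    have hlog2 := Nat.log_eq_iff (Or.inr ⟨one_lt_two, by omega⟩) |>.1 hlog
    obtain ⟨hlo, hhi⟩ := hlog2
    have h1 : i ≤ n / 2^k := by
      rw [le_div_iff' (by positivity)]
      calc 2^k * i ≤ (n/i) * i := Nat.mul_le_mul_right _ hlo
        _ ≤ n := Nat.div_mul_le_self n i
    have h2 : ¬ i ≤ n / 2^(k+1) := by
      intro hcon
      rw [le_div_iff' (by positivity)] at hcon
      have : 2^(k+1) ≤ n / i := (Nat.le_div_iff_mul_le (by omega)).2 hcon
      omega
    exact ⟨⟨hodd, h1⟩, fun hc => h2 hc.2⟩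
  · rintro ⟨⟨hodd, h1⟩, h2⟩
    have hi1 : 1 ≤ i := by omega
    have h2' : ¬ i ≤ n / 2^(k+1) := fun hc => h2 ⟨hodd, hc⟩
    have hle : 2^k * i ≤ n := by
      rw [le_div_iff' (by positivity)] at h1
      exact h1
    have hle2 : ¬ 2^(k+1) * i ≤ n := by
      intro hcon
      exact h2' ((le_div_iff' (by positivity)).2 hcon)
    have hik : i ≤ 2^k * i := Nat.le_mul_of_pos_left i (by positivity)
    have hin : i ≤ n := le_trans hik hle
    have hdiv1 : 1 ≤ n / i := (Nat.one_le_div_iff (by omega)).2 hin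
    refine ⟨⟨hodd, hin⟩, ?_⟩
    rw [Nat.log_eq_iff (Or.inr ⟨one_lt_two, by omega⟩)]
    constructor
    · exact (Nat.le_div_iff_mul_le (by omega)).2 (by omega)
    · by_contra hcon
      push_neg at hcon
      have h3 : 2^(k+1) ≤ n / i := hcon
      rw [Nat.le_div_iff_mul_le (by omega)] at h3
      exact hle2 (by omega)

lemma fiber_card (n k : ℕ) :
    ((odds n).filter (fun i => Nat.log 2 (n / i) = k)).card =
      (n / 2^k + 1)/2 - (n / 2^(k+1) + 1)/2 := by
  rw [fiber_eq, Finset.card_sdiff_of_subset (odds_mono (Nat.div_le_div_left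
    (Nat.pow_le_pow_right (by norm_num) (by omega)) (by positivity))), card_odds, card_odds]

end S17
namespace S17

def Ocnt (n k : ℕ) : ℕ := (n / 2^k + 1) / 2

lemma Ocnt_anti (n k : ℕ) : Ocnt n (k+1) ≤ Ocnt n k := by
  have : n / 2^(k+1) ≤ n / 2^k :=
    Nat.div_le_div_left (Nat.pow_le_pow_right (by norm_num) (by omega)) (by positivity)
  unfold Ocnt
  omega

lemma O_est (n k : ℕ) : |((Ocnt n k : ℝ)) - (n:ℝ)/2^(k+1)| ≤ 1/2 := by
  have h1 : (n / 2^k) * 2^k ≤ n := Nat.div_mul_le_self n (2^k)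
  have h2 : n < ((n / 2^k)+1) * 2^k := (Nat.div_lt_iff_lt_mul (by positivity)).1 (by omega)
  have h3 : Ocnt n k * 2 ≤ (n / 2^k) + 1 := Nat.div_mul_le_self ((n / 2^k)+1) 2
  have h4 : (n / 2^k) + 1 ≤ 2 * Ocnt n k + 1 := by
    have := (Nat.div_lt_iff_lt_mul (show (0:ℕ) < 2 by norm_num)).1
      (show ((n / 2^k)+1)/2 < Ocnt n k + 1 by unfold Ocnt; omega)
    omega
  have c1 : ((n / 2^k : ℕ):ℝ)*2^k ≤ n := by exact_mod_cast h1
  have c2 : (n:ℝ) < (((n / 2^k : ℕ):ℝ)+1)*2^k := by exact_mod_cast h2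
  have c3 : (Ocnt n k:ℝ)*2 ≤ ((n / 2^k : ℕ):ℝ)+1 := by exact_mod_cast h3
  have c4 : ((n / 2^k : ℕ):ℝ)+1 ≤ 2*(Ocnt n k:ℝ)+1 := by exact_mod_cast h4
  have hpk : (0:ℝ) < 2^k := by positivity
  have hp : (0:ℝ) < 2^(k+1) := by positivity
  have key : |(Ocnt n k:ℝ)*2^(k+1) - n| ≤ 2^k := by
    rw [abs_le]
    have hps : (2:ℝ)^(k+1) = 2^k*2 := by ring
    constructor
    · nlinarith
    · nlinarith
  have e : (Ocnt n k:ℝ) - (n:ℝ)/2^(k+1) = ((Ocnt n k:ℝ)*2^(k+1) - n)/2^(k+1) := by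
    field_simp
  rw [e, abs_div, abs_of_pos hp, div_le_iff₀ hp]
  calc |(Ocnt n k:ℝ)*2^(k+1) - n| ≤ 2^k := key
    _ = 1/2 * 2^(k+1) := by ring

lemma c_est (n k : ℕ) :
    |(((odds n).filter (fun i => Nat.log 2 (n / i) = k)).card : ℝ) - (n:ℝ)/2^(k+2)| ≤ 1 := by
  have hc : (((odds n).filter (fun i => Nat.log 2 (n / i) = k)).card : ℝ)
      = (Ocnt n k : ℝ) - (Ocnt n (k+1) : ℝ) := by
    rw [fiber_card n k,
      show (n / 2^k + 1)/2 - (n / 2^(k+1) + 1)/2 = Ocnt n k - Ocnt n (k+1) from rfl,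
      Nat.cast_sub (Ocnt_anti n k)]
  have h2x : (n:ℝ)/2^(k+1) = 2 * ((n:ℝ)/2^(k+2)) := by
    rw [show (2:ℝ)^(k+2) = 2^(k+1)*2 from by ring]
    field_simp
  have hA := O_est n k
  have hB := O_est n (k+1)
  rw [abs_le] at hA hB ⊢
  have hkk : (2:ℝ)^(k+1+1) = 2^(k+2) := by norm_num
  rw [hkk] at hB
  constructor
  · rw [hc]; linarith [hA.1, hB.2]
  · rw [hc]; linarith [hA.2, hB.1]

lemma nat_log_tendsto : Tendsto (fun n : ℕ => Nat.log 2 n) atTop atTop := by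
  apply tendsto_atTop_atTop.2
  intro b
  refine ⟨2^b, fun n hn => ?_⟩
  have := Nat.log_mono_right (b := 2) hn
  rwa [Nat.log_pow one_lt_two] at this

lemma poly_geom_tendsto : Tendsto (fun K : ℕ => ((K:ℝ)+1)^2 / 2^K) atTop (𝓝 0) := by
  have hr : ‖(1/2 : ℝ)‖ < 1 := by
    rw [Real.norm_eq_abs, abs_of_nonneg (by norm_num)]
    norm_num
  have h2 := (summable_pow_mul_geometric_of_norm_lt_one (R := ℝ) 2 hr).tendsto_atTop_zero
  have h1 := (summable_pow_mul_geometric_of_norm_lt_one (R := ℝ) 1 hr).tendsto_atTop_zero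
  have h0 := (summable_pow_mul_geometric_of_norm_lt_one (R := ℝ) 0 hr).tendsto_atTop_zero
  have comb := (h2.add ((h1.const_mul (2:ℝ)).add h0))
  norm_num at comb
  apply comb.congr
  intro K
  have hpow : ((1:ℝ)/2)^K = 1/2^K := by
    rw [one_div, inv_pow, one_div]
  rw [hpow]
  have h2K : (0:ℝ) < 2^K := by positivity
  field_simp
  ring

end S17
namespace S17

section Main
variable (T : ℕ → ℕ) (hT0 : T 0 = 3) (hT1 : T 1 = 5) (hT2 : T 2 = 9)
  (hTrec : ∀ k : ℕ, T (k + 3) = T k + T (k + 1) + T (k + 2))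

include hT0 hT1 hT2 hTrec

lemma g_nonneg (k : ℕ) : 0 ≤ Real.logb 3 (T k) := by
  have h := T_lower T hT0 hT1 hT2 hTrec k
  exact Real.logb_nonneg (by norm_num) (by exact_mod_cast (by omega : 1 ≤ T k))

lemma g_le (k : ℕ) : Real.logb 3 (T k) ≤ (k:ℝ)+1 := by
  have h := T_lower T hT0 hT1 hT2 hTrec k
  have hub : (T k : ℝ) ≤ (3:ℝ)^(k+1) := by exact_mod_cast T_upper T hT0 hT1 hT2 hTrec k
  have h1 : (0:ℝ) < (T k : ℝ) := by exact_mod_cast (by omega : 0 < T k)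
  calc Real.logb 3 (T k) ≤ Real.logb 3 ((3:ℝ)^(k+1)) :=
        Real.logb_le_logb_of_le (by norm_num) h1 hub
    _ = (k:ℝ)+1 := by
        rw [Real.logb_pow, Real.logb_self_eq_one (by norm_num : (1:ℝ) < 3)]
        push_cast
        ring

omit hT0 hT1 hT2 hTrec in
lemma aux_summable : Summable (fun k : ℕ => ((k:ℝ)+1)/2^(k+2)) := by
  have hr : ‖(1/2:ℝ)‖ < 1 := by
    rw [Real.norm_eq_abs, abs_of_nonneg (by norm_num)]
    norm_num
  have h1 := summable_pow_mul_geometric_of_norm_lt_one (R := ℝ) 1 hr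
  have h0 := summable_pow_mul_geometric_of_norm_lt_one (R := ℝ) 0 hr
  have h := (h1.add h0).div_const 4
  apply h.congr
  intro n
  have hp : (0:ℝ) < 2^n := by positivity
  have hpow : ((1:ℝ)/2)^n = 1/2^n := by rw [one_div, inv_pow, one_div]
  rw [hpow]
  have h22 : (2:ℝ)^(n+2) = 4*2^n := by ring
  rw [h22]
  field_simp

lemma sum_summable : Summable (fun k : ℕ => Real.logb 3 (T k)/2^(k+2)) := by
  apply Summable.of_nonneg_of_le ?_ ?_ aux_summable
  · intro k
    exact div_nonneg (g_nonneg T hT0 hT1 hT2 hTrec k) (by positivity)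
  · intro k
    apply div_le_div_of_nonneg_right ?_ (by positivity)
    exact g_le T hT0 hT1 hT2 hTrec k

lemma logN_eq (n : ℕ) :
    Real.logb 3 (NWords n Xset) =
      ∑ k ∈ Finset.range (Nat.log 2 n + 1),
        (((odds n).filter (fun i => Nat.log 2 (n / i) = k)).card : ℝ) * Real.logb 3 (T k) := by
  rw [nwords_prod T hT0 hT1 hT2 hTrec n, Nat.cast_prod]
  rw [Real.logb_prod _ _ (fun i _ => by
    have := T_lower T hT0 hT1 hT2 hTrec (Nat.log 2 (n / i))
    have : (0:ℝ) < (T (Nat.log 2 (n / i)) : ℝ) := by exact_mod_cast (by omega : 0 < T (Nat.log 2 (n / i)))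
    exact ne_of_gt this)]
  rw [← Finset.sum_fiberwise_of_maps_to (g := fun i => Nat.log 2 (n/i))
    (t := Finset.range (Nat.log 2 n + 1)) (fun i _ => Finset.mem_range.2
      (Nat.lt_succ_of_le (Nat.log_mono_right (Nat.div_le_self n i))))]
  apply Finset.sum_congr rfl
  intro k _
  have hcongr : ∀ i ∈ (odds n).filter (fun i => Nat.log 2 (n/i) = k),
      Real.logb 3 (T (Nat.log 2 (n/i))) = Real.logb 3 (T k) := by
    intro i hi
    rw [(Finset.mem_filter.1 hi).2]
  rw [Finset.sum_congr rfl hcongr, Finset.sum_const, nsmul_eq_mul]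

theorem main : Tendsto (fun n : ℕ => Real.logb 3 (NWords n Xset) / n) atTop
    (𝓝 (∑' k : ℕ, Real.logb 3 (T k) / 2 ^ (k + 2))) := by
  set S := ∑' k : ℕ, Real.logb 3 (T k) / 2 ^ (k + 2) with hS
  set f : ℕ → ℝ := fun k => Real.logb 3 (T k) / 2 ^ (k + 2) with hf
  have hsum : Summable f := sum_summable T hT0 hT1 hT2 hTrec
  set E : ℕ → ℝ := fun K => |S - ∑ k ∈ Finset.range K, f k| with hE
  have hEt : Tendsto E atTop (𝓝 0) := by
    have h := hsum.hasSum.tendsto_sum_nat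
    have h2 := (tendsto_const_nhds (x := S) (f := atTop (α := ℕ))).sub h
    rw [sub_self] at h2
    have h3 := h2.abs
    rw [abs_zero] at h3
    exact h3
  set φ : ℕ → ℝ := fun K => ((K:ℝ)+1)^2/2^K + E (K+1) with hφ
  have hφt : Tendsto φ atTop (𝓝 0) := by
    have h := poly_geom_tendsto.add (hEt.comp (tendsto_add_atTop_nat 1))
    rw [add_zero] at h
    exact h
  have hcomp : Tendsto (fun n : ℕ => φ (Nat.log 2 n)) atTop (𝓝 0) := hφt.comp nat_log_tendsto
  rw [tendsto_iff_dist_tendsto_zero]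
  apply squeeze_zero' (Eventually.of_forall fun n => dist_nonneg) ?_ hcomp
  filter_upwards [eventually_ge_atTop 1] with n hn
  rw [Real.dist_eq]
  set K := Nat.log 2 n with hK
  set c : ℕ → ℝ := fun k => (((odds n).filter (fun i => Nat.log 2 (n / i) = k)).card : ℝ) with hc
  have hNn : Real.logb 3 (NWords n Xset) = ∑ k ∈ Finset.range (K+1), c k * Real.logb 3 (T k) :=
    logN_eq T hT0 hT1 hT2 hTrec n
  have hn0 : (0:ℝ) < n := by exact_mod_cast hn
  have hn2K : (2:ℝ)^K ≤ n := by exact_mod_cast Nat.pow_log_le_self 2 (by omega)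
  have hstep1 : |Real.logb 3 (NWords n Xset)/n - ∑ k ∈ Finset.range (K+1), f k|
      ≤ ((K:ℝ)+1)^2/2^K := by
    rw [hNn, Finset.sum_div, ← Finset.sum_sub_distrib]
    refine le_trans (Finset.abs_sum_le_sum_abs _ _) ?_
    have hterm : ∀ k ∈ Finset.range (K+1), |c k * Real.logb 3 (T k)/n - f k| ≤ ((K:ℝ)+1)/n := by
      intro k hk
      have hgk0 := g_nonneg T hT0 hT1 hT2 hTrec k
      have hgkle := g_le T hT0 hT1 hT2 hTrec k
      have hck : |c k - (n:ℝ)/2^(k+2)| ≤ 1 := c_est n k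
      have e : c k * Real.logb 3 (T k)/n - f k
          = (c k - (n:ℝ)/2^(k+2)) * Real.logb 3 (T k) / n := by
        rw [hf]
        field_simp
      rw [e, abs_div, abs_of_pos hn0, abs_mul]
      have hkK : (k:ℝ) ≤ (K:ℝ) := by exact_mod_cast Nat.lt_succ_iff.1 (Finset.mem_range.1 hk)
      have hmul : |c k - (n:ℝ)/2^(k+2)| * |Real.logb 3 (T k)| ≤ 1 * ((K:ℝ)+1) := by
        apply mul_le_mul hck ?_ (abs_nonneg _) (by norm_num)
        rw [abs_of_nonneg hgk0]
        linarith
      rw [one_mul] at hmul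
      exact div_le_div_of_nonneg_right hmul hn0.le
    refine le_trans (Finset.sum_le_sum hterm) ?_
    rw [Finset.sum_const, Finset.card_range, nsmul_eq_mul]
    have heq : ((K+1:ℕ):ℝ) * (((K:ℝ)+1)/n) = ((K:ℝ)+1)^2/n := by push_cast; ring
    rw [heq]
    exact div_le_div_of_nonneg_left (by positivity) (by positivity) hn2K
  have htri : |Real.logb 3 (NWords n Xset)/n - S|
      ≤ |Real.logb 3 (NWords n Xset)/n - ∑ k ∈ Finset.range (K+1), f k|
        + |∑ k ∈ Finset.range (K+1), f k - S| :=
    abs_sub_le _ _ _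
  have h2 : |∑ k ∈ Finset.range (K+1), f k - S| = E (K+1) := by
    rw [hE, abs_sub_comm]
  calc |Real.logb 3 (NWords n Xset)/n - S|
      ≤ ((K:ℝ)+1)^2/2^K + E (K+1) := by
        rw [h2] at htri
        linarith
    _ = φ K := rfl

end Main
end S17

/-- **Example (multiplicative Tribonacci), Minkowski dimension.**
`dim_M(X) = Σ_{k≥1} log₃ T_{k-1}/2^{k+1}` where `T_0 = 3, T_1 = 5, T_2 = 9`,
`T_{k+2} = T_{k-1} + T_k + T_{k+1}`. -/
theorem stmt17 (T : ℕ → ℕ) (hT0 : T 0 = 3) (hT1 : T 1 = 5) (hT2 : T 2 = 9)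
    (hTrec : ∀ k : ℕ, T (k + 3) = T k + T (k + 1) + T (k + 2)) :
    Tendsto
      (fun n : ℕ =>
        Real.logb 3
          (NWords n {x : ℕ+ → Fin 3 | ∀ k : ℕ+,
            (x k = 1 → x (2 * k) = 0) ∧ (x k = 2 → x (2 * k) = 1)}) / n)
      atTop (𝓝 (∑' k : ℕ, Real.logb 3 (T k) / 2 ^ (k + 2))) := by
  exact S17.main T hT0 hT1 hT2 hTrec
end
end

section
/- Let m ≥ 2, let q ≥ 2 be an integer, and let Ω be a nonempty closed subset of Σ_m. Let t be the unique [1, m^{1/(q-1)}]-valued solution of t(u)^q = Σ_{j : uj ∈ Pref(Ω)} t(uj) on the tree of prefixes of Ω, let μ be the measure on Ω with μ[u₁…u_k] = ∏_{j=1}^k t(u₁…u_j)/t(u₁…u_{j-1})^q, and let P_μ be the measure on X_Ω with P_μ[u] = ∏_{i ≤ |u|, q ∤ i} μ[u|J_i]. For x ∈ X_Ω and ℓ ≥ 1, set a_ℓ(x) = (−log_m P_μ[x₁…x_{q^ℓ}]) / q^ℓ. Then for every x ∈ X_Ω, the Cesàro averages (a₁(x) + ⋯ + a_ℓ(x))/ℓ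 converge to (q−1)·log_m t(∅) as ℓ → ∞; in particular liminf_{ℓ→∞} a_ℓ(x) ≤ (q−1)·log_m t(∅) for every x ∈ X_Ω. -/
open scoped Classical ENNReal
open Filter MeasureTheory Topology

noncomputable section

namespace S19

def W {m : ℕ} (q : ℕ+) (x : ℕ+ → Fin m) (i : ℕ+) (k : ℕ) : List (Fin m) :=
  List.ofFn (fun j : Fin k => x (q ^ (j : ℕ) * i))

def KK (q M i : ℕ+) : ℕ := Nat.log (q:ℕ) ((M:ℕ)/(i:ℕ)) + 1

def FF (m : ℕ) (q : ℕ+) (x : ℕ+ → Fin m) (t : List (Fin m) → ℝ) (ℓ : ℕ) : ℝ :=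
  ∑ i ∈ (Finset.Icc 1 (q^ℓ : ℕ+)).filter (fun i => ¬ q ∣ i),
    ∑ j ∈ Finset.range (KK q (q^ℓ) i), Real.logb m (t (W q x i (j+1)))

variable {m : ℕ} {q : ℕ+} {x : ℕ+ → Fin m} {i M : ℕ+} {Ω : Set (ℕ+ → Fin m)}
  {t : List (Fin m) → ℝ} {μ P : Measure (ℕ+ → Fin m)}

lemma W_length (q : ℕ+) (x : ℕ+ → Fin m) (i : ℕ+) (k : ℕ) : (W q x i k).length = k :=
  List.length_ofFn

lemma W_take (q : ℕ+) (x : ℕ+ → Fin m) (i : ℕ+) {j k : ℕ} (h : j ≤ k) :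
    (W q x i k).take j = W q x i j := by
  apply List.ext_getElem
  · simp [W, h]
  · intro l h1 h2
    simp only [W, List.getElem_take, List.getElem_ofFn]

lemma W_mem_pref (hx : x ∈ XOm q Ω) (hi : ¬ q ∣ i) (k : ℕ) :
    W q x i k ∈ Pref Ω := by
  refine ⟨RestrJ q x i, hx i hi, ?_⟩
  intro j
  simp only [W, List.get_ofFn, List.get_eq_getElem, List.getElem_ofFn, RestrJ]
  show _ = (W q x i k)[(j:ℕ)]
  simp only [W, List.getElem_ofFn]
  congr 1

lemma KK_char (hq : 2 ≤ (q:ℕ)) (hin : i ≤ M) (j : ℕ) :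
    ((q:ℕ)^j * (i:ℕ) ≤ (M:ℕ)) ↔ j < KK q M i := by
  have hdiv : (M:ℕ)/(i:ℕ) ≠ 0 := by
    have : 0 < (M:ℕ)/(i:ℕ) := Nat.div_pos (by exact_mod_cast hin) i.pos
    omega
  rw [KK, Nat.lt_succ_iff, Nat.le_log_iff_pow_le (by omega) hdiv,
    Nat.le_div_iff_mul_le i.pos]

lemma cylJ_eq (hq : 2 ≤ (q:ℕ)) (hin : i ≤ M) :
    CylJ q M i x = Cyl (W q x i (KK q M i)) := by
  have key : ∀ ℓ : ℕ, (q ^ ℓ * i ≤ M) ↔ ℓ < KK q M i := by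
    intro ℓ
    rw [← KK_char hq hin ℓ]
    constructor
    · intro h; exact_mod_cast h
    · intro h; exact_mod_cast h
  ext y
  simp only [CylJ, Cyl, Begins, Set.mem_setOf_eq, W, List.get_ofFn]
  constructor
  · intro h j
    have hj : (j : ℕ) < KK q M i := by
      have := j.isLt; simpa [W_length, List.length_ofFn] using this
    have := h (j:ℕ) ((key _).mpr hj)
    simpa using this
  · intro h ℓ hℓ
    have hj : ℓ < KK q M i := (key ℓ).mp hℓ
    have hlen : ℓ < (List.ofFn (fun j : Fin (KK q M i) => x (q ^ (j:ℕ) * i))).length := by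
      simpa using hj
    have := h ⟨ℓ, hlen⟩
    simpa using this

lemma t_one_le (ht : TSol q Ω t) {u : List (Fin m)} (hu : u ∈ Pref Ω) : 1 ≤ t u :=
  (ht u hu).1.1

lemma tau_nonneg (hm : 2 ≤ m) (ht : TSol q Ω t) {u : List (Fin m)} (hu : u ∈ Pref Ω) :
    0 ≤ Real.logb m (t u) :=
  Real.logb_nonneg (by exact_mod_cast hm) (t_one_le ht hu)

lemma tau_le (hm : 2 ≤ m) (hq : 2 ≤ (q:ℕ)) (ht : TSol q Ω t) {u : List (Fin m)}
    (hu : u ∈ Pref Ω) : Real.logb m (t u) ≤ 1 / ((q:ℝ) - 1) := by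
  have hm1 : (1:ℝ) < m := by exact_mod_cast hm
  have h1 : Real.logb m (t u) ≤ Real.logb m ((m : ℝ) ^ ((1 : ℝ) / ((q : ℝ) - 1))) :=
    Real.logb_le_logb_of_le hm1 (lt_of_lt_of_le one_pos (t_one_le ht hu)) (ht u hu).1.2
  calc Real.logb m (t u) ≤ _ := h1
    _ = 1 / ((q:ℝ) - 1) := Real.logb_rpow (by positivity) (by exact_mod_cast (by omega : m ≠ 1))

lemma mu_cyl (hm : 2 ≤ m) (ht : TSol q Ω t) (hcyl : CylVals q Ω t μ)
    (u : List (Fin m)) (hu : ∀ j, u.take j ∈ Pref Ω) :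
    0 < (μ (Cyl u)).toReal ∧
    Real.logb m (μ (Cyl u)).toReal =
      ∑ j ∈ Finset.range u.length,
        (Real.logb m (t (u.take (j+1))) - (q:ℝ) * Real.logb m (t (u.take j))) := by
  have hu' : u ∈ Pref Ω := by simpa using hu u.length
  have hpos : ∀ j, 0 < t (u.take j) := fun j => lt_of_lt_of_le one_pos (t_one_le ht (hu j))
  have hfpos : ∀ j ∈ Finset.range u.length,
      0 < t (u.take (j+1)) / t (u.take j) ^ (q:ℕ) :=
    fun j _ => div_pos (hpos _) (pow_pos (hpos _) _)
  have hprod : 0 < ∏ j ∈ Finset.range u.length, t (u.take (j+1)) / t (u.take j) ^ (q:ℕ) :=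
    Finset.prod_pos hfpos
  rw [hcyl u hu', ENNReal.toReal_ofReal hprod.le]
  refine ⟨hprod, ?_⟩
  rw [Real.logb_prod _ _ (fun j hj => (hfpos j hj).ne')]
  refine Finset.sum_congr rfl (fun j hj => ?_)
  rw [Real.logb_div (hpos _).ne' (pow_pos (hpos _) _).ne', Real.logb_pow]

lemma W_take_pref (hx : x ∈ XOm q Ω) (hi : ¬ q ∣ i) (k : ℕ) (j : ℕ) :
    (W q x i k).take j ∈ Pref Ω := by
  rcases le_total j k with h | h
  · rw [W_take q x i h]; exact W_mem_pref hx hi j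
  · rw [List.take_of_length_le (by rw [W_length]; exact h)]
    exact W_mem_pref hx hi k

lemma mu_cylJ (hm : 2 ≤ m) (hq : 2 ≤ (q:ℕ)) (ht : TSol q Ω t) (hcyl : CylVals q Ω t μ)
    (hx : x ∈ XOm q Ω) (hin : i ≤ M) (hi : ¬ q ∣ i) :
    0 < (μ (CylJ q M i x)).toReal ∧
    Real.logb m (μ (CylJ q M i x)).toReal =
      ∑ j ∈ Finset.range (KK q M i),
        (Real.logb m (t (W q x i (j+1))) - (q:ℝ) * Real.logb m (t (W q x i j))) := by
  rw [cylJ_eq hq hin]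
  obtain ⟨h1, h2⟩ := mu_cyl hm ht hcyl (W q x i (KK q M i)) (W_take_pref hx hi _)
  refine ⟨h1, ?_⟩
  rw [h2, W_length]
  refine Finset.sum_congr rfl (fun j hj => ?_)
  rw [Finset.mem_range] at hj
  rw [W_take q x i hj, W_take q x i (Nat.le_of_lt hj)]

lemma logb_P (hm : 2 ≤ m) (hq : 2 ≤ (q:ℕ)) (ht : TSol q Ω t)
    (hcyl : CylVals q Ω t μ) (hP : ProdProp q μ P) (hx : x ∈ XOm q Ω) (n : ℕ+) :
    Real.logb m (P (CylN (n:ℕ) x)).toReal =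
      ∑ i ∈ (Finset.Icc 1 n).filter (fun i => ¬ q ∣ i),
        ∑ j ∈ Finset.range (KK q n i),
          (Real.logb m (t (W q x i (j+1))) - (q:ℝ) * Real.logb m (t (W q x i j))) := by
  rw [hP n x, ENNReal.toReal_prod, Real.logb_prod]
  · refine Finset.sum_congr rfl (fun i hi => ?_)
    simp only [Finset.mem_filter, Finset.mem_Icc] at hi
    exact (mu_cylJ hm hq ht hcyl hx hi.1.2 hi.2).2
  · intro i hi
    simp only [Finset.mem_filter, Finset.mem_Icc] at hi
    exact (mu_cylJ hm hq ht hcyl hx hi.1.2 hi.2).1.ne'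

lemma scale_iff (hq : 2 ≤ (q:ℕ)) (j ℓ a : ℕ) :
    (q:ℕ)^(j+1) * a ≤ (q:ℕ)^(ℓ+1) ↔ (q:ℕ)^j * a ≤ (q:ℕ)^ℓ := by
  have e1 : (q:ℕ)^(j+1) * a = (q:ℕ) * ((q:ℕ)^j * a) := by ring
  have e2 : (q:ℕ)^(ℓ+1) = (q:ℕ) * (q:ℕ)^ℓ := by ring
  rw [e1, e2]
  constructor
  · exact fun h => Nat.le_of_mul_le_mul_left h (by omega)
  · exact fun h => Nat.mul_le_mul_left _ h

lemma coe_pow (q : ℕ+) (k : ℕ) : ((q^k : ℕ+) : ℕ) = (q:ℕ)^k := by push_cast; ring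

lemma KK_one (hq : 2 ≤ (q:ℕ)) {ℓ : ℕ} (hin : i ≤ q^(ℓ+1)) (hgt : (q^ℓ : ℕ+) < i) :
    KK q (q^(ℓ+1)) i = 1 := by
  have hpos : 0 < KK q (q^(ℓ+1)) i := Nat.succ_pos _
  by_contra hne
  have h2 : 1 < KK q (q^(ℓ+1)) i := by omega
  have := (KK_char hq hin 1).mpr h2
  rw [coe_pow] at this
  have h3 : (q:ℕ) * (i:ℕ) ≤ (q:ℕ) * (q:ℕ)^ℓ := by
    calc (q:ℕ) * (i:ℕ) = (q:ℕ)^1 * (i:ℕ) := by ring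
      _ ≤ (q:ℕ)^(ℓ+1) := this
      _ = (q:ℕ) * (q:ℕ)^ℓ := by ring
  have h4 : (i:ℕ) ≤ (q:ℕ)^ℓ := Nat.le_of_mul_le_mul_left h3 (by omega)
  have h5 : ((q^ℓ : ℕ+):ℕ) < (i:ℕ) := by exact_mod_cast hgt
  rw [coe_pow] at h5
  omega

lemma KK_succ (hq : 2 ≤ (q:ℕ)) {ℓ : ℕ} (hin : i ≤ (q^ℓ : ℕ+)) :
    KK q (q^(ℓ+1)) i = KK q (q^ℓ) i + 1 := by
  have hin' : i ≤ (q^(ℓ+1) : ℕ+) :=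
    le_trans hin (by
      rw [← PNat.coe_le_coe, coe_pow, coe_pow]
      exact Nat.pow_le_pow_right (by omega) (by omega))
  have hs := fun j => KK_char hq hin j
  have hb := fun j => KK_char hq hin' j
  have key : ∀ j, j + 1 < KK q (q^(ℓ+1)) i ↔ j < KK q (q^ℓ) i := by
    intro j
    rw [← hb (j+1), ← hs j, coe_pow, coe_pow]
    exact scale_iff hq j ℓ i
  have h1 := key (KK q (q^ℓ) i)
  have h2 := key (KK q (q^ℓ) i - 1)
  have hpos : 0 < KK q (q^ℓ) i := Nat.succ_pos _
  omega

lemma pow_mul_inj_aux (hq : 2 ≤ (q:ℕ)) {i i' : ℕ+} {j j' : ℕ} (hi : ¬ q ∣ i)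
    (hle : j ≤ j') (h : q ^ j * i = q ^ j' * i') : j = j' ∧ i = i' := by
  have e : j' = j + (j' - j) := by omega
  rw [e, pow_add, mul_assoc] at h
  have h3 : i = q ^ (j' - j) * i' := mul_left_cancel h
  have hjj : j = j' := by
    by_contra hne
    have hs : j' - j = (j' - j - 1) + 1 := by omega
    apply hi
    rw [h3, hs, pow_succ]
    exact ⟨q ^ (j' - j - 1) * i', by ring⟩
  refine ⟨hjj, ?_⟩
  apply mul_left_cancel (a := q ^ j)
  rw [h]
  have : j' - j = 0 := by omega
  rw [this]
  simp

lemma pow_mul_inj (hq : 2 ≤ (q:ℕ)) {i i' : ℕ+} {j j' : ℕ} (hi : ¬ q ∣ i) (hi' : ¬ q ∣ i')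
    (h : q ^ j * i = q ^ j' * i') : j = j' ∧ i = i' := by
  rcases le_total j j' with hle | hle
  · exact pow_mul_inj_aux hq hi hle h
  · obtain ⟨h1, h2⟩ := pow_mul_inj_aux hq hi' hle h.symm
    exact ⟨h1.symm, h2.symm⟩

lemma sum_KK_le (hq : 2 ≤ (q:ℕ)) (n : ℕ+) :
    ∑ i ∈ (Finset.Icc 1 n).filter (fun i => ¬ q ∣ i), KK q n i ≤ (n:ℕ) := by
  classical
  set A := (Finset.Icc 1 n).filter (fun i => ¬ q ∣ i) with hA
  have h1 : ∑ i ∈ A, KK q n i = (A.sigma (fun i => Finset.range (KK q n i))).card := by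
    rw [Finset.card_sigma]
    simp
  rw [h1]
  have h2 := Finset.card_le_card_of_injOn (f := fun p : (_ : ℕ+) × ℕ => q ^ p.2 * p.1)
    (s := A.sigma (fun i => Finset.range (KK q n i))) (t := Finset.Icc 1 n) ?_ ?_
  · simpa using h2
  · rintro ⟨i, j⟩ hp
    simp only [Finset.mem_coe, Finset.mem_sigma, hA, Finset.mem_filter, Finset.mem_Icc, Finset.mem_range] at hp
    obtain ⟨⟨⟨-, hin⟩, -⟩, hj⟩ := hp
    have := (KK_char hq hin j).mpr hj
    simp only [Finset.mem_coe, Finset.mem_Icc]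
    constructor
    · exact (q ^ j * i).one_le
    · exact_mod_cast this
  · rintro ⟨i, j⟩ hp ⟨i', j'⟩ hp' heq
    simp only [Finset.mem_coe, Finset.mem_sigma, hA, Finset.mem_filter] at hp hp'
    obtain ⟨he1, he2⟩ := pow_mul_inj hq hp.1.2 hp'.1.2 heq
    have : j = j' := by simpa using he1
    simp [this, he2]

lemma card_A (hq : 2 ≤ (q:ℕ)) (ℓ : ℕ) :
    (((Finset.Icc 1 (q^(ℓ+1) : ℕ+))).filter (fun i => ¬ q ∣ i)).card
      = (q:ℕ)^(ℓ+1) - (q:ℕ)^ℓ := by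
  classical
  have hsplit := Finset.card_filter_add_card_filter_not
    (s := Finset.Icc 1 (q^(ℓ+1) : ℕ+)) (p := fun i => q ∣ i)
  have hIcc : (Finset.Icc 1 (q^(ℓ+1) : ℕ+)).card = (q:ℕ)^(ℓ+1) := by
    rw [PNat.card_Icc]
    simp
  have himg : (Finset.Icc 1 (q^(ℓ+1) : ℕ+)).filter (fun i => q ∣ i)
      = (Finset.Icc 1 (q^ℓ : ℕ+)).image (fun b => q * b) := by
    ext a
    simp only [Finset.mem_filter, Finset.mem_Icc, Finset.mem_image]
    constructor
    · rintro ⟨⟨-, hle⟩, c, rfl⟩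
      refine ⟨c, ⟨c.one_le, ?_⟩, rfl⟩
      have hle' : ((q*c : ℕ+):ℕ) ≤ ((q^(ℓ+1) : ℕ+):ℕ) := by exact_mod_cast hle
      have : (q:ℕ) * (c:ℕ) ≤ (q:ℕ) * (q:ℕ)^ℓ := by
        calc (q:ℕ) * (c:ℕ) = ((q*c : ℕ+):ℕ) := by push_cast; ring
          _ ≤ ((q^(ℓ+1) : ℕ+):ℕ) := hle'
          _ = (q:ℕ) * (q:ℕ)^ℓ := by push_cast [pow_succ]; ring
      have hc : (c:ℕ) ≤ (q:ℕ)^ℓ := Nat.le_of_mul_le_mul_left this (by omega)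
      rw [← PNat.coe_le_coe]
      push_cast
      exact hc
    · rintro ⟨b, ⟨-, hb⟩, rfl⟩
      refine ⟨⟨(q*b).one_le, ?_⟩, Dvd.intro _ rfl⟩
      calc q * b ≤ q * q^ℓ := mul_le_mul_right hb q
        _ = q^(ℓ+1) := by rw [pow_succ]; ring
  have hcard : ((Finset.Icc 1 (q^(ℓ+1) : ℕ+)).filter (fun i => q ∣ i)).card = (q:ℕ)^ℓ := by
    rw [himg, Finset.card_image_of_injective _ (mul_right_injective q), PNat.card_Icc]
    simp
  omega

lemma sum_eq (hq : 2 ≤ (q:ℕ)) (ℓ : ℕ) :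
    ∑ i ∈ (Finset.Icc 1 (q^(ℓ+1) : ℕ+)).filter (fun i => ¬ q ∣ i),
      ∑ j ∈ Finset.range (KK q (q^(ℓ+1)) i),
        (Real.logb m (t (W q x i (j+1))) - (q:ℝ) * Real.logb m (t (W q x i j)))
    = FF m q x t (ℓ+1) - (q:ℝ) * Real.logb m (t [])
        * (((Finset.Icc 1 (q^(ℓ+1) : ℕ+)).filter (fun i => ¬ q ∣ i)).card : ℝ)
      - (q:ℝ) * FF m q x t ℓ := by
  classical
  set τ : List (Fin m) → ℝ := fun u => Real.logb m (t u) with hτ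
  set A : Finset ℕ+ := (Finset.Icc 1 (q^(ℓ+1) : ℕ+)).filter (fun i => ¬ q ∣ i) with hA
  have hinner : ∀ i ∈ A,
      ∑ j ∈ Finset.range (KK q (q^(ℓ+1)) i), (τ (W q x i (j+1)) - (q:ℝ) * τ (W q x i j))
        = (∑ j ∈ Finset.range (KK q (q^(ℓ+1)) i), τ (W q x i (j+1)))
          - (q:ℝ) * (∑ j ∈ Finset.range (KK q (q^(ℓ+1)) i - 1), τ (W q x i (j+1)))
          - (q:ℝ) * τ [] := by
    intro i _
    obtain ⟨k, hk⟩ : ∃ k, KK q (q^(ℓ+1)) i = k + 1 := ⟨_, rfl⟩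
    rw [Finset.sum_sub_distrib, ← Finset.mul_sum, hk, Nat.add_sub_cancel,
      Finset.sum_range_succ' (fun j => τ (W q x i j)) k]
    have hW0 : W q x i 0 = [] := by simp [W]
    rw [hW0]
    ring
  rw [Finset.sum_congr rfl hinner, Finset.sum_sub_distrib, Finset.sum_sub_distrib,
    ← Finset.mul_sum, Finset.sum_const]
  have hFF1 : ∑ i ∈ A, ∑ j ∈ Finset.range (KK q (q^(ℓ+1)) i), τ (W q x i (j+1))
      = FF m q x t (ℓ+1) := rfl
  have hFF0 : ∑ i ∈ A, ∑ j ∈ Finset.range (KK q (q^(ℓ+1)) i - 1), τ (W q x i (j+1))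
      = FF m q x t ℓ := by
    have hsub : (Finset.Icc 1 (q^ℓ : ℕ+)).filter (fun i => ¬ q ∣ i) ⊆ A := by
      rw [hA]
      apply Finset.filter_subset_filter
      apply Finset.Icc_subset_Icc_right
      rw [← PNat.coe_le_coe, coe_pow, coe_pow]
      exact Nat.pow_le_pow_right (by omega) (by omega)
    rw [← Finset.sum_subset hsub]
    · refine Finset.sum_congr rfl (fun i hi => ?_)
      simp only [Finset.mem_filter, Finset.mem_Icc] at hi
      rw [KK_succ hq hi.1.2]
      simp [FF, hτ]
    · intro i hiA hiN
      simp only [hA, Finset.mem_filter, Finset.mem_Icc] at hiA hiN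
      have hgt : (q^ℓ : ℕ+) < i := by
        rcases lt_or_ge (q^ℓ : ℕ+) i with h | h
        · exact h
        · exact absurd ⟨⟨i.one_le, h⟩, hiA.2⟩ hiN
      rw [KK_one hq hiA.1.2 hgt]
      simp
  rw [hFF1, hFF0, nsmul_eq_mul]
  ring

lemma FF_nonneg (hm : 2 ≤ m) (ht : TSol q Ω t) (hx : x ∈ XOm q Ω) (ℓ : ℕ) :
    0 ≤ FF m q x t ℓ := by
  apply Finset.sum_nonneg
  intro i hi
  simp only [Finset.mem_filter] at hi
  exact Finset.sum_nonneg fun j _ => tau_nonneg hm ht (W_mem_pref hx hi.2 (j+1))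

lemma FF_le (hm : 2 ≤ m) (hq : 2 ≤ (q:ℕ)) (ht : TSol q Ω t) (hx : x ∈ XOm q Ω) (ℓ : ℕ) :
    FF m q x t ℓ ≤ (1 / ((q:ℝ) - 1)) * (q:ℝ)^ℓ := by
  have hq2 : (2:ℝ) ≤ (q:ℝ) := by exact_mod_cast hq
  have hB : (0:ℝ) ≤ 1 / ((q:ℝ) - 1) := div_nonneg zero_le_one (by linarith)
  calc FF m q x t ℓ
      ≤ ∑ i ∈ (Finset.Icc 1 (q^ℓ : ℕ+)).filter (fun i => ¬ q ∣ i),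
          (KK q (q^ℓ) i : ℝ) * (1 / ((q:ℝ) - 1)) := by
        apply Finset.sum_le_sum
        intro i hi
        simp only [Finset.mem_filter] at hi
        have := Finset.sum_le_card_nsmul (Finset.range (KK q (q^ℓ) i))
          (fun j => Real.logb m (t (W q x i (j+1)))) (1 / ((q:ℝ) - 1))
          (fun j _ => tau_le hm hq ht (W_mem_pref hx hi.2 (j+1)))
        refine le_trans this ?_
        rw [Finset.card_range, nsmul_eq_mul]
    _ = (∑ i ∈ (Finset.Icc 1 (q^ℓ : ℕ+)).filter (fun i => ¬ q ∣ i), (KK q (q^ℓ) i : ℝ))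
          * (1 / ((q:ℝ) - 1)) := (Finset.sum_mul _ _ _).symm
    _ ≤ ((q:ℝ)^ℓ) * (1 / ((q:ℝ) - 1)) := by
        apply mul_le_mul_of_nonneg_right _ hB
        have h := sum_KK_le hq (q^ℓ)
        rw [coe_pow] at h
        exact_mod_cast h
    _ = (1 / ((q:ℝ) - 1)) * (q:ℝ)^ℓ := by ring

lemma a_formula (hm : 2 ≤ m) (hq : 2 ≤ (q:ℕ)) (ht : TSol q Ω t)
    (hcyl : CylVals q Ω t μ) (hP : ProdProp q μ P) (hx : x ∈ XOm q Ω) (ℓ : ℕ) :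
    -Real.logb m ((P (CylN ((q:ℕ)^(ℓ+1)) x)).toReal) / ((q:ℕ):ℝ)^(ℓ+1)
      = ((q:ℝ) - 1) * Real.logb m (t [])
        + FF m q x t ℓ / (q:ℝ)^ℓ - FF m q x t (ℓ+1) / (q:ℝ)^(ℓ+1) := by
  have hcast : (q:ℕ)^(ℓ+1) = ((q^(ℓ+1) : ℕ+) : ℕ) := (coe_pow _ _).symm
  rw [hcast, logb_P hm hq ht hcyl hP hx (q^(ℓ+1)), sum_eq hq ℓ, card_A hq ℓ]
  have hle : (q:ℕ)^ℓ ≤ (q:ℕ)^(ℓ+1) := Nat.pow_le_pow_right (by omega) (by omega)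
  have hcast2 : (((q:ℕ)^(ℓ+1) - (q:ℕ)^ℓ : ℕ) : ℝ) = ((q:ℝ))^(ℓ+1) - ((q:ℝ))^ℓ := by
    rw [Nat.cast_sub hle]
    push_cast
    ring
  rw [hcast2]
  have hQ : ((q:ℝ)) ≠ 0 := by
    have : (2:ℝ) ≤ (q:ℝ) := by exact_mod_cast hq
    linarith
  field_simp
  ring

lemma cesaro (a G : ℕ → ℝ) (c B : ℝ) (hG0 : ∀ ℓ, 0 ≤ G ℓ) (hGB : ∀ ℓ, G ℓ ≤ B)
    (ha : ∀ ℓ : ℕ, a (ℓ + 1) = c + G ℓ - G (ℓ + 1)) :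
    Tendsto (fun L : ℕ => (∑ ℓ ∈ Finset.Icc 1 L, a ℓ) / L) atTop (𝓝 c) ∧
      liminf a atTop ≤ c := by
  have hB : 0 ≤ B := le_trans (hG0 0) (hGB 0)
  have hsum : ∀ L : ℕ, ∑ ℓ ∈ Finset.Icc 1 L, a ℓ = L * c + (G 0 - G L) := by
    intro L
    have h1 : Finset.Icc 1 L = Finset.Ico 1 (L + 1) := by
      rw [Finset.Ico_add_one_right_eq_Icc]
    rw [h1, Finset.sum_Ico_eq_sum_range]
    simp only [Nat.add_sub_cancel]
    have : ∀ k ∈ Finset.range L, a (1 + k) = c + (G k - G (k + 1)) := by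
      intro k _
      rw [add_comm 1 k, ha k]; ring
    rw [Finset.sum_congr rfl this, Finset.sum_add_distrib, Finset.sum_const,
      Finset.sum_range_sub' (fun k => G k)]
    simp [mul_comm]
  constructor
  · have heq : ∀ᶠ L : ℕ in atTop,
        c + (G 0 - G L) / L = (∑ ℓ ∈ Finset.Icc 1 L, a ℓ) / L := by
      filter_upwards [eventually_ge_atTop 1] with L hL
      rw [hsum L]
      have hL0 : (L : ℝ) ≠ 0 := by positivity
      field_simp
    have h0 : Tendsto (fun L : ℕ => (G 0 - G L) / L) atTop (𝓝 0) := by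
      apply squeeze_zero_norm (a := fun L : ℕ => 2 * B / L)
      · intro L
        rcases Nat.eq_zero_or_pos L with rfl | hL
        · simp
        · rw [Real.norm_eq_abs, abs_div, abs_of_nonneg (by positivity : (0:ℝ) ≤ (L:ℝ))]
          apply div_le_div_of_nonneg_right ?_ (by positivity)
          have := hG0 0; have := hGB 0; have := hG0 L; have := hGB L
          rw [abs_le]; constructor <;> nlinarith
      · exact tendsto_const_div_atTop_nhds_zero_nat (2 * B)
    have := (tendsto_const_nhds (x := c) (f := atTop)).add h0
    rw [add_zero] at this
    exact Tendsto.congr' heq this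
  · by_contra hcon
    push_neg at hcon
    have hbdd : IsBoundedUnder (· ≥ ·) atTop a := by
      refine ⟨c - B, ?_⟩
      simp only [eventually_map]
      filter_upwards [eventually_ge_atTop 1] with ℓ hℓ
      obtain ⟨k, rfl⟩ := Nat.exists_eq_add_of_le hℓ
      rw [add_comm 1 k] at *
      rw [ha k]
      have := hG0 (k+1); have := hGB k; have := hG0 k; have := hGB (k+1)
      linarith
    set c' := (c + liminf a atTop) / 2 with hc'
    have hcc' : c < c' := by rw [hc']; linarith
    have hc'lim : c' < liminf a atTop := by rw [hc']; linarith
    have hev : ∀ᶠ ℓ in atTop, c' < a ℓ := eventually_lt_of_lt_liminf hc'lim hbdd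
    rw [eventually_atTop] at hev
    obtain ⟨N, hN⟩ := hev
    set ε := c' - c with hε
    have hεpos : 0 < ε := by rw [hε]; linarith
    have key : ∀ k : ℕ, G (N + k) ≤ G N - k * ε := by
      intro k
      induction k with
      | zero => simp
      | succ k ih =>
        have h1 : c' < a (N + k + 1) := hN _ (by omega)
        rw [ha (N + k)] at h1
        have : G (N + k + 1) < G (N + k) - ε := by rw [hε]; linarith
        have h2 : N + (k + 1) = N + k + 1 := by omega
        rw [h2]
        push_cast
        linarith
    obtain ⟨k, hk⟩ := exists_nat_gt (G N / ε)
    have h1 := key k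
    have h2 := hG0 (N + k)
    have h3 : G N < k * ε := by
      rw [div_lt_iff₀ hεpos] at hk
      linarith
    linarith

end S19

/-- **Lemma 5.2.** For every `x ∈ X_Ω`, the Cesàro averages of
`a_ℓ(x) = -log_m P_μ[x₁…x_{q^ℓ}]/q^ℓ` converge to `(q-1) log_m t(∅)`; in particular
`liminf_ℓ a_ℓ(x) ≤ (q-1) log_m t(∅)`. -/
theorem stmt19 (m : ℕ) (hm : 2 ≤ m) (q : ℕ+) (hq : 2 ≤ (q : ℕ))
    (Ω : Set (ℕ+ → Fin m)) (hne : Ω.Nonempty) (hcl : IsClosed Ω)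
    (t : List (Fin m) → ℝ) (ht : TSol q Ω t)
    (μ : Measure (ℕ+ → Fin m)) [IsProbabilityMeasure μ] (hμΩ : μ Ω = 1)
    (hcyl : CylVals q Ω t μ)
    (P : Measure (ℕ+ → Fin m)) [IsProbabilityMeasure P] (hP : ProdProp q μ P) :
    ∀ x ∈ XOm q Ω,
      Tendsto
        (fun L : ℕ =>
          (∑ ℓ ∈ Finset.Icc 1 L,
            -Real.logb m ((P (CylN ((q : ℕ) ^ ℓ) x)).toReal) / ((q : ℕ) : ℝ) ^ ℓ) / L)
        atTop (𝓝 (((q : ℝ) - 1) * Real.logb m (t []))) ∧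
      Filter.liminf
        (fun ℓ : ℕ =>
          -Real.logb m ((P (CylN ((q : ℕ) ^ ℓ) x)).toReal) / ((q : ℕ) : ℝ) ^ ℓ)
        atTop ≤ ((q : ℝ) - 1) * Real.logb m (t []) := by
  intro x hx
  have hG0 : ∀ ℓ, 0 ≤ S19.FF m q x t ℓ / ((q:ℝ))^ℓ := fun ℓ =>
    div_nonneg (S19.FF_nonneg hm ht hx ℓ) (by positivity)
  have hGB : ∀ ℓ, S19.FF m q x t ℓ / ((q:ℝ))^ℓ ≤ 1 / ((q:ℝ) - 1) := by
    intro ℓ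
    rw [div_le_iff₀ (by positivity)]
    exact S19.FF_le hm hq ht hx ℓ
  have ha : ∀ ℓ : ℕ,
      (fun ℓ : ℕ => -Real.logb m ((P (CylN ((q : ℕ) ^ ℓ) x)).toReal) / ((q:ℕ):ℝ) ^ ℓ) (ℓ + 1)
        = ((q : ℝ) - 1) * Real.logb m (t [])
          + S19.FF m q x t ℓ / ((q:ℝ))^ℓ - S19.FF m q x t (ℓ+1) / ((q:ℝ))^(ℓ+1) := by
    intro ℓ
    exact S19.a_formula hm hq ht hcyl hP hx ℓ
  exact S19.cesaro _ (fun ℓ => S19.FF m q x t ℓ / ((q:ℝ))^ℓ)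
    (((q : ℝ) - 1) * Real.logb m (t [])) (1 / ((q:ℝ) - 1)) hG0 hGB ha
end
end
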